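/- Let π be a uniformly random bijection E → {1,…,m} on the edge set of a finite hypergraph H = (V,E), run the sequential greedy matching on π, and fix an edge d ∈ E. Let R = π(p(d)) be the step at which d is removed from the free set. Then for every r ∈ {1,…,m} and every injective sequence σ = (σ_1,…,σ_{r−1}) of edges such that the event A = { π(σ_i) = i for all i < r, and R = r } has positive probability, conditioned on A the matched edge p(d) is uniformly distributed over P, where P is the set of edges incident to d (including d) that are still free after the greedy process handles σ_1,…,σ_{r−1} in order. -/

import Mathlib

/-!
For a uniformly random priority bijection `π : E ≃ Fin m` (step `r ∈ {1,…,m}`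
of the greedy process corresponds to the `π`-value `r - 1`), conditioned on
the event `A` that the first `r - 1` processed edges are `σ₁, …, σ_{r-1}` (in
this order) and that the fixed edge `d` is removed from the free set exactly
at step `r`, the matched edge `p(d)` is uniformly distributed over the set `P`
of edges incident to `d` (including `d`) that are still free after the greedy
process handles `σ₁, …, σ_{r-1}`.  Uniformity is expressed by counting:
for every `x ∈ P`, `|A ∩ {p(d) = x}| * |P| = |A|`.
-/

open Finset

open scoped Classical

variable {V E : Type*}

/-- Two hyperedges are incident if they share a vertex. -/
def Incident [DecidableEq V] (vert : E → Finset V) (e f : E) : Prop :=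
  (vert e ∩ vert f).Nonempty

/-- `Matched vert π e` holds iff the sequential greedy matching (processing the
edges in increasing `π`-order, selecting an edge iff it is still free when
processed) selects `e`. -/
def Matched [DecidableEq V] (vert : E → Finset V) (π : E → ℕ) (e : E) : Prop :=
  ∀ f, π f < π e → Incident vert f e → ¬ Matched vert π f
termination_by π e

/-- The matched edge owning `e` (the `π`-least matched edge incident to `e`),
i.e. the matched edge `p(e)` whose sample space `e` belongs to;  `e` is removed
from the free set at the step at which `p(e)` is processed. -/
noncomputable def owner [DecidableEq V] (vert : E → Finset V) (π : E → ℕ) (e : E) : E :=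
  if h : ∃ f, (Matched vert π f ∧ Incident vert f e) ∧
      ∀ f', Matched vert π f' → Incident vert f' e → π f ≤ π f' then
    h.choose
  else e

/-- One step of the greedy process on the free set `F`:  process edge `e`;
if `e` is free it is selected and all free edges incident to it (including `e`
itself) are removed from the free set. -/
noncomputable def stepFree [DecidableEq V] [DecidableEq E]
    (vert : E → Finset V) (F : Finset E) (e : E) : Finset E :=
  if e ∈ F then F.filter fun f => ¬ Incident vert e f else F

/-- The set of free edges after the greedy process handles the edges of the
list `L` in order (starting from all edges free). -/
noncomputable def freeAfter [DecidableEq V] [DecidableEq E] [Fintype E]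
    (vert : E → Finset V) (L : List E) : Finset E :=
  L.foldl (stepFree vert) Finset.univ

lemma incident_symm [DecidableEq V] (vert : E → Finset V) {e f : E}
    (h : Incident vert e f) : Incident vert f e := by
  simpa [Incident, Finset.inter_comm] using h

lemma incident_self [DecidableEq V] (vert : E → Finset V) (hne : (vert e).Nonempty) :
    Incident vert e e := by
  simpa [Incident] using hne

lemma matched_iff [DecidableEq V] (vert : E → Finset V) (π : E → ℕ) (e : E) :
    Matched vert π e ↔ ∀ f, π f < π e → Incident vert f e → ¬ Matched vert π f := by
  rw [Matched]

lemma notMem_foldl [DecidableEq V] [DecidableEq E] (vert : E → Finset V)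
    {e : E} {F : Finset E} (h : e ∉ F) (L : List E) :
    e ∉ L.foldl (stepFree vert) F := by
  induction L generalizing F with
  | nil => exact h
  | cons a t ih =>
    apply ih
    unfold stepFree
    split
    · intro hmem; exact h (Finset.mem_of_mem_filter e hmem)
    · exact h

lemma notMem_freeAfter [DecidableEq V] [DecidableEq E] [Fintype E] (vert : E → Finset V)
    (hne : ∀ e : E, (vert e).Nonempty) {e : E} {L : List E} (h : e ∈ L) :
    e ∉ freeAfter vert L := by
  unfold freeAfter
  obtain ⟨L₁, L₂, rfl⟩ := List.append_of_mem h
  rw [List.foldl_append, List.foldl_cons]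
  apply notMem_foldl
  unfold stepFree
  split
  · simp [incident_self vert (hne e)]
  · assumption

lemma freeAfter_eq [DecidableEq V] [DecidableEq E] [Fintype E] (vert : E → Finset V)
    (π : E → ℕ) (hπ : Function.Injective π) (L : List E) :
    (∀ i : ℕ, (h : i < L.length) → π L[i] = i) →
    freeAfter vert L = Finset.univ.filter
      (fun f => ∀ g, π g < L.length → Matched vert π g → ¬ Incident vert g f) := by
  induction L using List.reverseRecOn with
  | nil => simp [freeAfter]
  | append_singleton L e ih =>
    intro hL
    have hLlen : ∀ i, (h : i < L.length) → π L[i] = i := by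
      intro i h
      have := hL i (by simp; omega)
      rwa [List.getElem_append_left] at this
    have hπe : π e = L.length := by
      have := hL L.length (by simp)
      rwa [List.getElem_concat_length rfl] at this
    have hfa : freeAfter vert (L ++ [e]) = stepFree vert (freeAfter vert L) e := by
      simp [freeAfter, List.foldl_append]
    rw [hfa, ih hLlen]
    have hmem : (e ∈ Finset.univ.filter (fun f => ∀ g, π g < L.length →
        Matched vert π g → ¬ Incident vert g f)) ↔ Matched vert π e := by
      rw [Finset.mem_filter, matched_iff]
      simp only [Finset.mem_univ, true_and, hπe]
      constructor
      · intro h f hf hinc hm; exact h f hf hm hinc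
      · intro h g hg hm hinc; exact h g hg hinc hm
    unfold stepFree
    split_ifs with hc
    · rw [hmem] at hc
      ext f
      simp only [Finset.mem_filter, Finset.mem_univ, true_and, List.length_append,
        List.length_singleton]
      constructor
      · rintro ⟨h1, h2⟩ g hg hm hinc
        rcases Nat.lt_succ_iff_lt_or_eq.mp hg with hlt | heq
        · exact h1 g hlt hm hinc
        · cases hπ (heq.trans hπe.symm)
          exact h2 hinc
      · intro h
        refine ⟨fun g hg hm hinc => h g (by omega) hm hinc, h e (by omega) hc⟩
    · rw [hmem] at hc
      ext f
      simp only [Finset.mem_filter, Finset.mem_univ, true_and, List.length_append,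
        List.length_singleton]
      constructor
      · intro h g hg hm hinc
        rcases Nat.lt_succ_iff_lt_or_eq.mp hg with hlt | heq
        · exact h g hlt hm hinc
        · cases hπ (heq.trans hπe.symm)
          exact hc hm
      · intro h g hg hm hinc; exact h g (by omega) hm hinc

lemma exists_matched_incident [DecidableEq V] (vert : E → Finset V)
    (hne : ∀ e : E, (vert e).Nonempty) (π : E → ℕ) (d : E) :
    ∃ f, Matched vert π f ∧ Incident vert f d := by
  by_cases h : Matched vert π d
  · exact ⟨d, h, incident_self vert (hne d)⟩
  · rw [matched_iff] at h; push_neg at h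
    obtain ⟨f, _, hfi, hfm⟩ := h
    exact ⟨f, hfm, hfi⟩

lemma owner_spec [DecidableEq V] [Fintype E] (vert : E → Finset V)
    (hne : ∀ e : E, (vert e).Nonempty) (π : E → ℕ) (d : E) :
    Matched vert π (owner vert π d) ∧ Incident vert (owner vert π d) d ∧
    ∀ f', Matched vert π f' → Incident vert f' d → π (owner vert π d) ≤ π f' := by
  have hex : ∃ f, (Matched vert π f ∧ Incident vert f d) ∧
      ∀ f', Matched vert π f' → Incident vert f' d → π f ≤ π f' := by
    obtain ⟨f0, hf0⟩ := exists_matched_incident vert hne π d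
    obtain ⟨f, hfS, hmin⟩ := Finset.exists_min_image
      (Finset.univ.filter fun f => Matched vert π f ∧ Incident vert f d) π
      ⟨f0, by simp [hf0.1, hf0.2]⟩
    simp only [Finset.mem_filter, Finset.mem_univ, true_and] at hfS hmin
    exact ⟨f, hfS, fun f' h1 h2 => hmin f' (by simp [h1, h2])⟩
  rw [owner, dif_pos hex]
  obtain ⟨⟨h1, h2⟩, h3⟩ := hex.choose_spec
  exact ⟨h1, h2, h3⟩

lemma owner_eq [DecidableEq V] [Fintype E] (vert : E → Finset V)
    (hne : ∀ e : E, (vert e).Nonempty) {π : E → ℕ} (hπ : Function.Injective π) {d x : E}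
    (h1 : Matched vert π x) (h2 : Incident vert x d)
    (h3 : ∀ f', Matched vert π f' → Incident vert f' d → π x ≤ π f') :
    owner vert π d = x := by
  obtain ⟨g1, g2, g3⟩ := owner_spec vert hne π d
  exact hπ (le_antisymm (g3 x h1 h2) (h3 _ g1 g2))

lemma owner_mem_P [DecidableEq V] [DecidableEq E] [Fintype E] (vert : E → Finset V)
    (hne : ∀ e : E, (vert e).Nonempty) {π : E → ℕ} (hπ : Function.Injective π) {σ : List E}
    (hσ : ∀ i : ℕ, (h : i < σ.length) → π σ[i] = i) {d : E}
    (hd : π (owner vert π d) = σ.length) :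
    owner vert π d ∈ (freeAfter vert σ).filter fun f => Incident vert f d := by
  obtain ⟨g1, g2, g3⟩ := owner_spec vert hne π d
  rw [Finset.mem_filter]
  refine ⟨?_, g2⟩
  rw [freeAfter_eq vert π hπ σ hσ, Finset.mem_filter]
  refine ⟨Finset.mem_univ _, fun g hg hm hinc => ?_⟩
  exact (matched_iff vert π _ |>.mp g1) g (by rw [hd]; exact hg) hinc hm

lemma d_free [DecidableEq V] [DecidableEq E] [Fintype E] (vert : E → Finset V)
    (hne : ∀ e : E, (vert e).Nonempty) {π : E → ℕ} (hπ : Function.Injective π) {σ : List E}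
    (hσ : ∀ i : ℕ, (h : i < σ.length) → π σ[i] = i) {d : E}
    (hd : π (owner vert π d) = σ.length) :
    d ∈ freeAfter vert σ := by
  rw [freeAfter_eq vert π hπ σ hσ, Finset.mem_filter]
  refine ⟨Finset.mem_univ _, fun g hg hm hinc => ?_⟩
  have := (owner_spec vert hne π d).2.2 g hm hinc
  omega

lemma key [DecidableEq V] [DecidableEq E] [Fintype E] (vert : E → Finset V)
    (hne : ∀ e : E, (vert e).Nonempty) {π : E → ℕ} (hπ : Function.Injective π) {σ : List E}
    (hσ : ∀ i : ℕ, (h : i < σ.length) → π σ[i] = i) {d x y : E}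
    (hy : owner vert π d = y) (hd : π y = σ.length)
    (hx : x ∈ (freeAfter vert σ).filter fun f => Incident vert f d) :
    (∀ i : ℕ, (h : i < σ.length) → (fun e => π (Equiv.swap x y e)) σ[i] = i) ∧
    owner vert (fun e => π (Equiv.swap x y e)) d = x ∧
    (fun e => π (Equiv.swap x y e)) x = σ.length := by
  have hdπ : π (owner vert π d) = σ.length := by rw [hy]; exact hd
  obtain ⟨hxF, hxI⟩ := Finset.mem_filter.mp hx
  have hyP := owner_mem_P vert hne hπ hσ hdπ
  rw [hy] at hyP
  obtain ⟨hyF, hyI⟩ := Finset.mem_filter.mp hyP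
  set π' : E → ℕ := fun e => π (Equiv.swap x y e) with hπ'
  have hπ'inj : Function.Injective π' := hπ.comp (Equiv.injective _)
  have hσ' : ∀ i : ℕ, (h : i < σ.length) → π' σ[i] = i := by
    intro i h
    have hmemσ : σ[i] ∈ σ := List.getElem_mem h
    have hxne : σ[i] ≠ x := by
      intro he; exact notMem_freeAfter vert hne (he ▸ hmemσ) hxF
    have hyne : σ[i] ≠ y := by
      intro he; exact notMem_freeAfter vert hne (he ▸ hmemσ) hyF
    simp only [hπ', Equiv.swap_apply_of_ne_of_ne hxne hyne]
    exact hσ i h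
  have hπ'x : π' x = σ.length := by simp only [hπ', Equiv.swap_apply_left]; exact hd
  have hch := freeAfter_eq vert π' hπ'inj σ hσ'
  have hdF : d ∈ freeAfter vert σ := d_free vert hne hπ hσ hdπ
  rw [hch, Finset.mem_filter] at hdF hxF
  have hmx : Matched vert π' x := by
    rw [matched_iff]
    intro f hf hinc hm
    exact hxF.2 f (by rw [hπ'x] at hf; exact hf) hm hinc
  refine ⟨hσ', ?_, hπ'x⟩
  apply owner_eq vert hne hπ'inj hmx hxI
  intro f' hm' hinc'
  rw [hπ'x]
  by_contra hlt
  push_neg at hlt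
  exact hdF.2 f' hlt hm' hinc'

theorem stmt3 [DecidableEq V] [Fintype E] [DecidableEq E] {m r : ℕ}
    (vert : E → Finset V) (hne : ∀ e : E, (vert e).Nonempty)
    (hm : Fintype.card E = m) (d : E)
    (hr1 : 1 ≤ r) (hrm : r ≤ m)
    (σ : List E) (hσlen : σ.length = r - 1) (hσinj : σ.Nodup) :
    -- `P`: the edges incident to `d` (including `d`) still free after `σ`
    let P : Finset E := (freeAfter vert σ).filter fun f => Incident vert f d
    -- the event `A`: `π (σ_i) = i` for all `i < r`, and `d` is removed from
    -- the free set at step `r` (i.e. `π (p(d)) = r` in 1-indexed steps)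
    let A : Finset (E ≃ Fin m) := Finset.univ.filter fun π : E ≃ Fin m =>
      (∀ i : Fin σ.length, ((π (σ.get i)) : ℕ) = (i : ℕ)) ∧
      ((π (owner vert (fun e => (π e : ℕ)) d)) : ℕ) = r - 1
    -- `A` has positive probability
    A.Nonempty →
    -- conditioned on `A`, the matched edge `p(d)` is uniform over `P`
    ∀ x ∈ P,
      (A.filter fun π : E ≃ Fin m => owner vert (fun e => (π e : ℕ)) d = x).card * P.card
        = A.card := by
  intro P A hA x hx
  have hinj : ∀ π : E ≃ Fin m, Function.Injective (fun e => (π e : ℕ)) :=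
    fun π a b h => π.injective (Fin.val_injective h)
  have hAmem : ∀ π : E ≃ Fin m, π ∈ A ↔
      (∀ i : ℕ, (h : i < σ.length) → ((π σ[i] : ℕ)) = i) ∧
      ((π (owner vert (fun e => (π e : ℕ)) d) : ℕ)) = r - 1 := by
    intro π
    simp only [A, Finset.mem_filter, Finset.mem_univ, true_and]
    constructor
    · rintro ⟨h1, h2⟩
      exact ⟨fun i h => by simpa using h1 ⟨i, h⟩, h2⟩
    · rintro ⟨h1, h2⟩
      exact ⟨fun i => by simpa using h1 i.val i.isLt, h2⟩
  have hfib : ∀ π ∈ A, owner vert (fun e => (π e : ℕ)) d ∈ P := by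
    intro π hπ
    rw [hAmem] at hπ
    exact owner_mem_P vert hne (hinj π) (fun i h => hπ.1 i h)
      (by rw [hπ.2, hσlen])
  have hsum : A.card = ∑ y ∈ P,
      (A.filter fun π : E ≃ Fin m => owner vert (fun e => (π e : ℕ)) d = y).card :=
    Finset.card_eq_sum_card_fiberwise hfib
  have hconst : ∀ y ∈ P,
      (A.filter fun π : E ≃ Fin m => owner vert (fun e => (π e : ℕ)) d = y).card
        = (A.filter fun π : E ≃ Fin m => owner vert (fun e => (π e : ℕ)) d = x).card := by
    intro y hy
    apply Finset.card_bij' (i := fun π _ => (Equiv.swap x y).trans π)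
      (j := fun π _ => (Equiv.swap x y).trans π)
    · intro π hπ
      rw [Finset.mem_filter] at hπ
      obtain ⟨hπA, hπo⟩ := hπ
      rw [hAmem] at hπA
      have hd : (π y : ℕ) = σ.length := by
        rw [← hπo, hπA.2, hσlen]
      obtain ⟨k1, k2, k3⟩ := key vert hne (hinj π) (fun i h => hπA.1 i h) hπo hd hx
      rw [Finset.mem_filter]
      refine ⟨(hAmem _).mpr ⟨fun i h => k1 i h, ?_⟩, k2⟩
      show (fun e => (((Equiv.swap x y).trans π) e : ℕ))
        (owner vert (fun e => (((Equiv.swap x y).trans π) e : ℕ)) d) = r - 1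
      rw [show (owner vert (fun e => (((Equiv.swap x y).trans π) e : ℕ)) d) = x from k2]
      rw [show ((fun e => (((Equiv.swap x y).trans π) e : ℕ)) x) = σ.length from k3, hσlen]
    · intro π hπ
      rw [Finset.mem_filter] at hπ
      obtain ⟨hπA, hπo⟩ := hπ
      rw [hAmem] at hπA
      have hd : (π x : ℕ) = σ.length := by
        rw [← hπo, hπA.2, hσlen]
      obtain ⟨k1, k2, k3⟩ := key vert hne (hinj π) (fun i h => hπA.1 i h) hπo hd hy
      rw [Finset.mem_filter]
      have hswap : Equiv.swap x y = Equiv.swap y x := Equiv.swap_comm x y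
      rw [hswap]
      refine ⟨(hAmem _).mpr ⟨fun i h => k1 i h, ?_⟩, k2⟩
      show (fun e => (((Equiv.swap y x).trans π) e : ℕ))
        (owner vert (fun e => (((Equiv.swap y x).trans π) e : ℕ)) d) = r - 1
      rw [show (owner vert (fun e => (((Equiv.swap y x).trans π) e : ℕ)) d) = y from k2]
      rw [show ((fun e => (((Equiv.swap y x).trans π) e : ℕ)) y) = σ.length from k3, hσlen]
    · intro π hπ
      ext e
      simp [Equiv.swap_apply_self]
    · intro π hπ
      ext e
      simp [Equiv.swap_apply_self]
  rw [hsum, Finset.sum_congr rfl hconst, Finset.sum_const, smul_eq_mul]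
  exact mul_comm _ _
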